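/- Fix an integer n ≥ 1 and holomorphic functions a,b,c,d : Δ → ℂ with a(0) = a'(0) = b(0) = c(0) = 0, d(0) ≠ 0, and a(z)d(z) − b(z)c(z) = z^(2n) for all z ∈ Δ; set F(z) = z^(−n)·(a(z), b(z); c(z), d(z)) on Δ*, and assume F is null, i.e. det F'(z) = 0 for all z ∈ Δ*. Then the following are equivalent: (i) F'·F⁻¹ has a pole of order 2 at 0, i.e. z ↦ z²·F'(z)·F(z)⁻¹ extends holomorphically to Δ with nonzero value at 0; (ii) ord₀(c) = 2n − 1; (iii) b'(0) ≠ 0. Likewise, F⁻¹·F' has a pole of order 2 at 0 if and only if ord₀(b) = 2n − 1, if and only if c'(0) ≠ 0. -/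

import Mathlib

/-!
STATEMENT 4: For a null `F` in normal form with pole of order `n`:
`F'F⁻¹` has a pole of order 2 at `0` ↔ `ord₀(c) = 2n−1` ↔ `b'(0) ≠ 0`;
likewise `F⁻¹F'` has a pole of order 2 at `0` ↔ `ord₀(b) = 2n−1` ↔ `c'(0) ≠ 0`.
-/

attribute [local instance] Matrix.normedAddCommGroup Matrix.normedSpace

open Metric Matrix

/-- The open unit disc in `ℂ`. -/
noncomputable def Disc : Set ℂ := Metric.ball (0 : ℂ) 1

/-- The punctured open unit disc in `ℂ`. -/
noncomputable def PDisc : Set ℂ := Metric.ball (0 : ℂ) 1 \ {0}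

/-- A matrix-valued holomorphic function `G` on the punctured disc has a pole of
order 2 at `0` if `z ↦ z² • G z` extends holomorphically to the disc with nonzero
value at `0`. -/
def HasPoleOrderTwoAtZero (G : ℂ → Matrix (Fin 2) (Fin 2) ℂ) : Prop :=
  ∃ H : ℂ → Matrix (Fin 2) (Fin 2) ℂ, DifferentiableOn ℂ H Disc ∧
    (∀ z ∈ PDisc, H z = (z ^ 2) • G z) ∧ H 0 ≠ 0



open Filter Topology


section Germ

/-- deriv of an analytic germ is analytic. -/
lemma analyticAt_deriv {g : ℂ → ℂ} (hg : AnalyticAt ℂ g 0) : AnalyticAt ℂ (deriv g) 0 := by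
  obtain ⟨s, hs, hga⟩ := hg.exists_mem_nhds_analyticOnNhd
  exact hga.deriv 0 (mem_of_mem_nhds hs)

/-- Comparison of values through a power factorization identity. -/
lemma val_lemma {p q : ℕ} {g h : ℂ → ℂ} (hg : ContinuousAt g 0) (hh : ContinuousAt h 0)
    (hpq : p ≤ q) (hev : ∀ᶠ z in 𝓝 (0:ℂ), z ^ p * g z = z ^ q * h z) :
    g 0 = 0 ^ (q - p) * h 0 := by
  have hev' : ∀ᶠ z in 𝓝[≠] (0:ℂ), g z = z ^ (q - p) * h z := by
    filter_upwards [nhdsWithin_le_nhds hev, self_mem_nhdsWithin] with z hz hz0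
    have hzp : (z : ℂ) ^ p ≠ 0 := pow_ne_zero _ hz0
    have : z ^ p * g z = z ^ p * (z ^ (q - p) * h z) := by
      rw [hz, ← mul_assoc, ← pow_add, Nat.add_sub_cancel' hpq]
    exact mul_left_cancel₀ hzp this
  have h1 : Filter.Tendsto g (𝓝[≠] (0:ℂ)) (𝓝 (g 0)) :=
    hg.continuousWithinAt.tendsto
  have h2 : Filter.Tendsto (fun z : ℂ => z ^ (q - p) * h z) (𝓝[≠] (0:ℂ))
      (𝓝 ((0:ℂ) ^ (q - p) * h 0)) := by
    apply Filter.Tendsto.mono_left _ nhdsWithin_le_nhds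
    exact ((continuousAt_pow _ _ ).mul hh).tendsto
  exact tendsto_nhds_unique (h1.congr' hev') h2

/-- If `z^p g = z^q h` near 0 with `g 0 ≠ 0` then `q ≤ p`. -/
lemma le_of_fac {p q : ℕ} {g h : ℂ → ℂ} (hg : ContinuousAt g 0) (hh : ContinuousAt h 0)
    (hg0 : g 0 ≠ 0) (hev : ∀ᶠ z in 𝓝 (0:ℂ), z ^ p * g z = z ^ q * h z) : q ≤ p := by
  by_contra hlt
  push_neg at hlt
  have := val_lemma hg hh hlt.le hev
  rw [zero_pow (by omega), zero_mul] at this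
  exact hg0 this

/-- If `z^p g = z^p h` near 0 then `g 0 = h 0`. -/
lemma val_eq_of_fac {p : ℕ} {g h : ℂ → ℂ} (hg : ContinuousAt g 0) (hh : ContinuousAt h 0)
    (hev : ∀ᶠ z in 𝓝 (0:ℂ), z ^ p * g z = z ^ p * h z) : g 0 = h 0 := by
  simpa using val_lemma hg hh le_rfl hev

end Germ

/-- derivative of a factored germ `f = z^(k+1) g`. -/
lemma deriv_fac {k : ℕ} {g f : ℂ → ℂ} (hg : AnalyticAt ℂ g 0)
    (hf : f =ᶠ[𝓝 (0:ℂ)] fun z => z ^ (k+1) * g z) :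
    deriv f =ᶠ[𝓝 (0:ℂ)] fun z => z ^ k * (((k:ℂ)+1) * g z + z * deriv g z) := by
  have h1 : deriv f =ᶠ[𝓝 (0:ℂ)] deriv (fun z => z ^ (k+1) * g z) := hf.deriv
  apply h1.trans
  filter_upwards [hg.eventually_analyticAt] with z hz
  have hd : HasDerivAt (fun z : ℂ => z ^ (k+1) * g z)
      ((((k:ℂ)+1) * z ^ k) * g z + z ^ (k+1) * deriv g z) z := by
    have := (hasDerivAt_pow (k+1) z).mul hz.differentiableAt.hasDerivAt
    exact this.congr_deriv (by simp)
  rw [hd.deriv]; ring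

/-- `z * deriv f` for a factored germ `f = z^k g` (any `k`). -/
lemma zderiv_fac {k : ℕ} {g f : ℂ → ℂ} (hg : AnalyticAt ℂ g 0)
    (hf : f =ᶠ[𝓝 (0:ℂ)] fun z => z ^ k * g z) :
    (fun z => z * deriv f z) =ᶠ[𝓝 (0:ℂ)]
      fun z => z ^ k * ((k:ℂ) * g z + z * deriv g z) := by
  cases k with
  | zero =>
    have h1 : deriv f =ᶠ[𝓝 (0:ℂ)] deriv g := by
      apply Filter.EventuallyEq.deriv
      simpa using hf
    filter_upwards [h1] with z hz
    simp [hz, mul_comm]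
  | succ k =>
    have := deriv_fac hg hf
    filter_upwards [this] with z hz
    rw [hz]; push_cast; ring

/-- The operator `L f = z f' - N f` on a factored germ. -/
lemma Lop_fac {k : ℕ} (N : ℂ) {g f : ℂ → ℂ} (hg : AnalyticAt ℂ g 0)
    (hf : f =ᶠ[𝓝 (0:ℂ)] fun z => z ^ k * g z) :
    (fun z => z * deriv f z - N * f z) =ᶠ[𝓝 (0:ℂ)]
      fun z => z ^ k * ((((k:ℂ) - N) * g z + z * deriv g z)) := by
  filter_upwards [zderiv_fac hg hf, hf] with z h1 h2
  rw [h1, h2]; ring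

lemma order_exists {f : ℂ → ℂ} (hf : AnalyticAt ℂ f 0) (hne : ¬ (f =ᶠ[𝓝 (0:ℂ)] 0)) :
    ∃ (k : ℕ) (g : ℂ → ℂ), AnalyticAt ℂ g 0 ∧ g 0 ≠ 0 ∧
      (f =ᶠ[𝓝 (0:ℂ)] fun z => z ^ k * g z) ∧ analyticOrderAt f 0 = (k : ℕ∞) := by
  have hord : analyticOrderAt f 0 ≠ ⊤ := fun h =>
    hne ((analyticOrderAt_eq_top.1 h).mono fun z hz => hz)
  obtain ⟨k, hk⟩ := WithTop.ne_top_iff_exists.1 hord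
  obtain ⟨g, hgA, hg0, hev⟩ := (hf.analyticOrderAt_eq_natCast (n := k)).1 hk.symm
  refine ⟨k, g, hgA, hg0, ?_, hk.symm⟩
  filter_upwards [hev] with z hz
  simpa [smul_eq_mul] using hz

lemma pow_not_germ_zero (K : ℕ) (hK : 1 ≤ K) {f : ℂ → ℂ}
    (h0 : f =ᶠ[𝓝 (0:ℂ)] 0) (hpow : f =ᶠ[𝓝 (0:ℂ)] fun z => z ^ K) : False := by
  have hev : ∀ᶠ z in 𝓝[≠] (0:ℂ), False := by
    filter_upwards [nhdsWithin_le_nhds (h0.symm.trans hpow), self_mem_nhdsWithin] with z hz hz0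
    exact hz0 (pow_eq_zero_iff (by omega : K ≠ 0) |>.1 hz.symm)
  exact hev.exists.elim fun _ h => h

example : True := trivial
lemma nonvanish {m : ℕ} {a b c d : ℂ → ℂ}
    (haA : AnalyticAt ℂ a 0) (hdA : AnalyticAt ℂ d 0) (hd0 : d 0 ≠ 0)
    (Hdet : (fun z => a z * d z - b z * c z) =ᶠ[𝓝 (0:ℂ)] fun z => z ^ (2*m+2))
    (Hnull : (fun z => (z * deriv a z - ((m:ℂ)+1) * a z) * (z * deriv d z - ((m:ℂ)+1) * d z))
      =ᶠ[𝓝 (0:ℂ)]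
      fun z => (z * deriv b z - ((m:ℂ)+1) * b z) * (z * deriv c z - ((m:ℂ)+1) * c z))
    (hbc : (fun z => b z * c z) =ᶠ[𝓝 (0:ℂ)] 0)
    (hLbc : (fun z => (z * deriv b z - ((m:ℂ)+1) * b z) * (z * deriv c z - ((m:ℂ)+1) * c z))
      =ᶠ[𝓝 (0:ℂ)] 0) : False := by
  set N : ℂ := (m:ℂ) + 1 with hN
  have hNne : N ≠ 0 := by
    rw [hN]
    have := Nat.cast_add_one_ne_zero (R := ℂ) m
    push_cast at this ⊢
    exact this
  have had : (fun z => a z * d z) =ᶠ[𝓝 (0:ℂ)] fun z => z ^ (2*m+2) := by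
    filter_upwards [Hdet, hbc] with z h1 h2
    have h2' : b z * c z = 0 := h2
    linear_combination h1 + h2'
  have hLaLd : (fun z => (z * deriv a z - N * a z) * (z * deriv d z - N * d z))
      =ᶠ[𝓝 (0:ℂ)] 0 := Hnull.trans hLbc
  have hLdA : AnalyticAt ℂ (fun z => z * deriv d z - N * d z) 0 := by
    exact ((analyticAt_id.mul (analyticAt_deriv hdA)).sub (analyticAt_const.mul hdA))
  have hLd0 : (fun z => z * deriv d z - N * d z) 0 = -(N * d 0) := by simp
  have hLdev : ∀ᶠ z in 𝓝 (0:ℂ), z * deriv d z - N * d z ≠ 0 := by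
    apply hLdA.continuousAt.eventually_ne
    show (0:ℂ) * deriv d 0 - N * d 0 ≠ 0
    rw [zero_mul, zero_sub]
    exact neg_ne_zero.2 (mul_ne_zero hNne hd0)
  have hLa : (fun z => z * deriv a z - N * a z) =ᶠ[𝓝 (0:ℂ)] 0 := by
    filter_upwards [hLaLd, hLdev] with z h1 h2
    exact (mul_eq_zero.1 h1).resolve_right h2
  have hane : ¬ (a =ᶠ[𝓝 (0:ℂ)] 0) := by
    intro h
    refine pow_not_germ_zero (2*m+2) (by omega) ?_ had
    filter_upwards [h] with z hz
    simp only [Pi.zero_apply] at hz ⊢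
    rw [hz, zero_mul]
  obtain ⟨ka, g, hgA, hg0, hfac, -⟩ := order_exists haA hane
  have hLafac := Lop_fac N hgA hfac
  have hcofA : AnalyticAt ℂ (fun z => ((ka:ℂ) - N) * g z + z * deriv g z) 0 :=
    (analyticAt_const.mul hgA).add (analyticAt_id.mul (analyticAt_deriv hgA))
  have hval : ((ka:ℂ) - N) * g 0 = 0 := by
    have hev : ∀ᶠ z in 𝓝 (0:ℂ),
        z ^ ka * (((ka:ℂ) - N) * g z + z * deriv g z) = z ^ ka * (0:ℂ) := by
      filter_upwards [hLafac, hLa] with z h1 h2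
      rw [← h1]
      simpa using h2
    have := val_eq_of_fac hcofA.continuousAt continuousAt_const hev
    simpa using this
  have hka : ka = m + 1 := by
    have : (ka:ℂ) = N := by
      rcases mul_eq_zero.1 hval with h | h
      · linear_combination h
      · exact absurd h hg0
    rw [hN] at this
    exact_mod_cast this
  have hev2 : ∀ᶠ z in 𝓝 (0:ℂ), z ^ (m+1) * (g z * d z) = z ^ (2*m+2) * (1:ℂ) := by
    filter_upwards [had, hfac] with z h1 h2
    rw [mul_one, ← h1, h2, hka]; ring
  have hle := le_of_fac ((hgA.mul hdA).continuousAt) continuousAt_const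
    (by simpa using mul_ne_zero hg0 hd0) hev2
  omega
lemma core_aux {m kb kc : ℕ} {a b c d u v : ℂ → ℂ}
    (haA : AnalyticAt ℂ a 0) (hdA : AnalyticAt ℂ d 0) (hd0 : d 0 ≠ 0)
    (Hdet : (fun z => a z * d z - b z * c z) =ᶠ[𝓝 (0:ℂ)] fun z => z ^ (2*m+2))
    (Hnull : (fun z => (z * deriv a z - ((m:ℂ)+1) * a z) * (z * deriv d z - ((m:ℂ)+1) * d z))
      =ᶠ[𝓝 (0:ℂ)]
      fun z => (z * deriv b z - ((m:ℂ)+1) * b z) * (z * deriv c z - ((m:ℂ)+1) * c z))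
    (huA : AnalyticAt ℂ u 0) (hu0 : u 0 ≠ 0)
    (hbfac : b =ᶠ[𝓝 (0:ℂ)] fun z => z ^ kb * u z)
    (hvA : AnalyticAt ℂ v 0) (hv0 : v 0 ≠ 0)
    (hcfac : c =ᶠ[𝓝 (0:ℂ)] fun z => z ^ kc * v z)
    (hkb : 1 ≤ kb) (hkc : 1 ≤ kc) :
    kb + kc ≤ 2*m+2 ∧ (kb = 1 → kc = 2*m+1) := by
  set N : ℂ := (m:ℂ) + 1 with hN
  have hNne : N ≠ 0 := by
    rw [hN]
    have := Nat.cast_add_one_ne_zero (R := ℂ) m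
    push_cast at this ⊢
    exact this
  have hdev : ∀ᶠ z in 𝓝 (0:ℂ), d z ≠ 0 := hdA.continuousAt.eventually_ne hd0
  -- Ld facts
  have hLdA : AnalyticAt ℂ (fun z => z * deriv d z - N * d z) 0 :=
    ((analyticAt_id.mul (analyticAt_deriv hdA)).sub (analyticAt_const.mul hdA))
  have hLd0 : (0:ℂ) * deriv d 0 - N * d 0 ≠ 0 := by
    rw [zero_mul, zero_sub]
    exact neg_ne_zero.2 (mul_ne_zero hNne hd0)
  -- L factorizations of b and c
  have hLbfac := Lop_fac N huA hbfac
  have hLcfac := Lop_fac N hvA hcfac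
  have hcofB : AnalyticAt ℂ (fun z => ((kb:ℂ) - N) * u z + z * deriv u z) 0 :=
    (analyticAt_const.mul huA).add (analyticAt_id.mul (analyticAt_deriv huA))
  have hcofC : AnalyticAt ℂ (fun z => ((kc:ℂ) - N) * v z + z * deriv v z) 0 :=
    (analyticAt_const.mul hvA).add (analyticAt_id.mul (analyticAt_deriv hvA))
  -- part 1
  have part1 : kb + kc ≤ 2*m+2 := by
    by_contra hgt
    push_neg at hgt
    set W : ℂ → ℂ := fun z => 1 + z ^ (kb + kc - (2*m+2)) * (u z * v z) with hW
    have hWA : AnalyticAt ℂ W 0 :=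
      analyticAt_const.add ((analyticAt_id.pow _).mul (huA.mul hvA))
    have hW0 : W 0 = 1 := by
      simp [hW, zero_pow (by omega : kb + kc - (2*m+2) ≠ 0)]
    have hgA : AnalyticAt ℂ (fun z => W z / d z) 0 := hWA.div hdA hd0
    have hafac : a =ᶠ[𝓝 (0:ℂ)] fun z => z ^ (2*m+2) * (W z / d z) := by
      filter_upwards [Hdet, hbfac, hcfac, hdev] with z h1 h2 h3 h4
      rw [← mul_div_assoc, eq_div_iff h4]
      have hsplit : z ^ (kb + kc) = z ^ (2*m+2) * z ^ (kb + kc - (2*m+2)) := by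
        rw [← pow_add]
        congr 1
        omega
      calc a z * d z = z ^ (2*m+2) + b z * c z := by linear_combination h1
        _ = z ^ (2*m+2) + z ^ (kb+kc) * (u z * v z) := by rw [h2, h3]; ring
        _ = z ^ (2*m+2) * W z := by rw [hW, hsplit]; ring
    have hLafac := Lop_fac N hgA hafac
    have hcofA : AnalyticAt ℂ
        (fun z => (((2*m+2:ℕ):ℂ) - N) * (W z / d z) + z * deriv (fun z => W z / d z) z) 0 :=
      (analyticAt_const.mul hgA).add (analyticAt_id.mul (analyticAt_deriv hgA))
    -- combine
    have hev : ∀ᶠ z in 𝓝 (0:ℂ),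
        z ^ (2*m+2) * (((((2*m+2:ℕ):ℂ) - N) * (W z / d z)
            + z * deriv (fun z => W z / d z) z) * (z * deriv d z - N * d z))
          = z ^ (kb + kc) * ((((kb:ℂ) - N) * u z + z * deriv u z)
            * (((kc:ℂ) - N) * v z + z * deriv v z)) := by
      filter_upwards [Hnull, hLafac, hLbfac, hLcfac] with z h1 h2 h3 h4
      calc z ^ (2*m+2) * (((((2*m+2:ℕ):ℂ) - N) * (W z / d z)
              + z * deriv (fun z => W z / d z) z) * (z * deriv d z - N * d z))
          = (z * deriv a z - N * a z) * (z * deriv d z - N * d z) := by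
            linear_combination (-(z * deriv d z - N * d z)) * h2
        _ = (z * deriv b z - N * b z) * (z * deriv c z - N * c z) := h1
        _ = _ := by rw [h3, h4, pow_add]; ring
    have hcont1 : ContinuousAt (fun z => (((((2*m+2:ℕ):ℂ) - N) * (W z / d z)
        + z * deriv (fun z => W z / d z) z) * (z * deriv d z - N * d z))) 0 :=
      (hcofA.mul hLdA).continuousAt
    have hval1 : ((((2*m+2:ℕ):ℂ) - N) * (W 0 / d 0)
        + 0 * deriv (fun z => W z / d z) 0) * ((0:ℂ) * deriv d 0 - N * d 0) ≠ 0 := by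
      rw [zero_mul, add_zero, hW0]
      apply mul_ne_zero _ hLd0
      apply mul_ne_zero _ (by simpa using (one_div_ne_zero hd0))
      rw [hN]
      push_cast
      intro h
      have : (m:ℂ) = -1 := by linear_combination h
      have h2 : ((m:ℕ):ℂ) ≠ -1 := by
        intro hh
        have : ((m:ℕ):ℂ) + 1 ≠ 0 := Nat.cast_add_one_ne_zero m
        rw [hh] at this
        simp at this
      exact h2 this
    have := le_of_fac hcont1 ((hcofB.mul hcofC).continuousAt) hval1 hev
    omega
  refine ⟨part1, fun hkb1 => ?_⟩
  -- part 2
  by_contra hne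
  have hkcle : kc ≤ 2*m := by omega
  set W : ℂ → ℂ := fun z => u z * v z + z ^ (2*m+1-kc) with hW
  have hWA : AnalyticAt ℂ W 0 := (huA.mul hvA).add (analyticAt_id.pow _)
  have hW0 : W 0 = u 0 * v 0 := by
    simp [hW, zero_pow (by omega : 2*m+1-kc ≠ 0)]
  have hgA : AnalyticAt ℂ (fun z => W z / d z) 0 := hWA.div hdA hd0
  have hafac : a =ᶠ[𝓝 (0:ℂ)] fun z => z ^ (1+kc) * (W z / d z) := by
    filter_upwards [Hdet, hbfac, hcfac, hdev] with z h1 h2 h3 h4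
    rw [← mul_div_assoc, eq_div_iff h4]
    have hsplit : z ^ (2*m+2) = z ^ (1+kc) * z ^ (2*m+1-kc) := by
      rw [← pow_add]; congr 1; omega
    calc a z * d z = z ^ (2*m+2) + b z * c z := by linear_combination h1
      _ = z ^ (2*m+2) + z ^ (1+kc) * (u z * v z) := by rw [h2, h3, hkb1]; ring
      _ = z ^ (1+kc) * W z := by rw [hW, hsplit]; ring
  have hLafac := Lop_fac N hgA hafac
  have hcofA : AnalyticAt ℂ
      (fun z => (((1+kc:ℕ):ℂ) - N) * (W z / d z) + z * deriv (fun z => W z / d z) z) 0 :=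
    (analyticAt_const.mul hgA).add (analyticAt_id.mul (analyticAt_deriv hgA))
  have hev : ∀ᶠ z in 𝓝 (0:ℂ),
      z ^ (1+kc) * (((((1+kc:ℕ):ℂ) - N) * (W z / d z)
          + z * deriv (fun z => W z / d z) z) * (z * deriv d z - N * d z))
        = z ^ (1+kc) * ((((kb:ℂ) - N) * u z + z * deriv u z)
          * (((kc:ℂ) - N) * v z + z * deriv v z)) := by
    filter_upwards [Hnull, hLafac, hLbfac, hLcfac] with z h1 h2 h3 h4
    calc z ^ (1+kc) * (((((1+kc:ℕ):ℂ) - N) * (W z / d z)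
            + z * deriv (fun z => W z / d z) z) * (z * deriv d z - N * d z))
        = (z * deriv a z - N * a z) * (z * deriv d z - N * d z) := by
          linear_combination (-(z * deriv d z - N * d z)) * h2
      _ = (z * deriv b z - N * b z) * (z * deriv c z - N * c z) := h1
      _ = _ := by rw [h3, h4, hkb1, pow_add, pow_one]; ring
  have hveq := val_eq_of_fac ((hcofA.mul hLdA).continuousAt)
    ((hcofB.mul hcofC).continuousAt) hev
  simp only [Pi.mul_apply, zero_mul, add_zero, zero_sub] at hveq
  rw [hW0] at hveq
  -- hveq : ((1+kc) - N) * (u0 v0 / d0) * (-(N * d 0)) = ((kb - N) u0) * ((kc - N) v0)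
  have hkey : (kc:ℂ) * (u 0 * v 0) * d 0 = 0 := by
    rw [hkb1] at hveq
    push_cast at hveq
    field_simp at hveq
    linear_combination (-(u 0 * v 0 * d 0)) * hveq
  have h1 : (kc:ℂ) * (u 0 * v 0) = 0 := by
    rcases mul_eq_zero.1 hkey with h | h
    · exact h
    · exact absurd h hd0
  have h2 : (kc:ℂ) = 0 := by
    rcases mul_eq_zero.1 h1 with h | h
    · exact h
    · exact absurd h (mul_ne_zero hu0 hv0)
  have : kc = 0 := by exact_mod_cast h2
  omega
lemma germ_zero_L {m : ℕ} {b : ℂ → ℂ} (hb : b =ᶠ[𝓝 (0:ℂ)] 0) :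
    (fun z => z * deriv b z - ((m:ℂ)+1) * b z) =ᶠ[𝓝 (0:ℂ)] 0 := by
  have hd : deriv b =ᶠ[𝓝 (0:ℂ)] deriv (0 : ℂ → ℂ) := hb.deriv
  filter_upwards [hb, hd] with z h1 h2
  have h1' : b z = 0 := h1
  have h2' : deriv b z = 0 := by rw [h2]; exact deriv_const z 0
  simp [h1', h2']

lemma core_main {m : ℕ} {a b c d : ℂ → ℂ}
    (haA : AnalyticAt ℂ a 0) (hbA : AnalyticAt ℂ b 0) (hcA : AnalyticAt ℂ c 0)
    (hdA : AnalyticAt ℂ d 0) (hd0 : d 0 ≠ 0) (hb0 : b 0 = 0) (hc0 : c 0 = 0)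
    (Hdet : (fun z => a z * d z - b z * c z) =ᶠ[𝓝 (0:ℂ)] fun z => z ^ (2*m+2))
    (Hnull : (fun z => (z * deriv a z - ((m:ℂ)+1) * a z) * (z * deriv d z - ((m:ℂ)+1) * d z))
      =ᶠ[𝓝 (0:ℂ)]
      fun z => (z * deriv b z - ((m:ℂ)+1) * b z) * (z * deriv c z - ((m:ℂ)+1) * c z)) :
    ∃ (kb kc : ℕ) (u v : ℂ → ℂ),
      AnalyticAt ℂ u 0 ∧ u 0 ≠ 0 ∧ (b =ᶠ[𝓝 (0:ℂ)] fun z => z ^ kb * u z) ∧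
        analyticOrderAt b 0 = (kb : ℕ∞) ∧
      AnalyticAt ℂ v 0 ∧ v 0 ≠ 0 ∧ (c =ᶠ[𝓝 (0:ℂ)] fun z => z ^ kc * v z) ∧
        analyticOrderAt c 0 = (kc : ℕ∞) ∧
      1 ≤ kb ∧ 1 ≤ kc ∧ kb + kc ≤ 2*m+2 ∧
      (kb = 1 ↔ kc = 2*m+1) ∧ (kc = 1 ↔ kb = 2*m+1) := by
  have hbne : ¬ (b =ᶠ[𝓝 (0:ℂ)] 0) := by
    intro h
    refine nonvanish haA hdA hd0 Hdet Hnull ?_ ?_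
    · filter_upwards [h] with z hz
      have : b z = 0 := hz
      simp [this]
    · filter_upwards [germ_zero_L (m := m) h] with z hz
      have : z * deriv b z - ((m:ℂ)+1) * b z = 0 := hz
      simp [this]
  have hcne : ¬ (c =ᶠ[𝓝 (0:ℂ)] 0) := by
    intro h
    refine nonvanish haA hdA hd0 Hdet Hnull ?_ ?_
    · filter_upwards [h] with z hz
      have : c z = 0 := hz
      simp [this]
    · filter_upwards [germ_zero_L (m := m) h] with z hz
      have : z * deriv c z - ((m:ℂ)+1) * c z = 0 := hz
      simp [this]
  obtain ⟨kb, u, huA, hu0, hbfac, hbord⟩ := order_exists hbA hbne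
  obtain ⟨kc, v, hvA, hv0, hcfac, hcord⟩ := order_exists hcA hcne
  have hkb1 : 1 ≤ kb := by
    rcases Nat.eq_zero_or_pos kb with h | h
    · exfalso
      have := hbfac.eq_of_nhds
      rw [h] at this
      simp only [pow_zero, one_mul] at this
      exact hu0 (this ▸ hb0)
    · exact h
  have hkc1 : 1 ≤ kc := by
    rcases Nat.eq_zero_or_pos kc with h | h
    · exfalso
      have := hcfac.eq_of_nhds
      rw [h] at this
      simp only [pow_zero, one_mul] at this
      exact hv0 (this ▸ hc0)
    · exact h
  -- swapped hypotheses
  have Hdet' : (fun z => a z * d z - c z * b z) =ᶠ[𝓝 (0:ℂ)] fun z => z ^ (2*m+2) := by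
    filter_upwards [Hdet] with z hz
    linear_combination hz
  have Hnull' : (fun z => (z * deriv a z - ((m:ℂ)+1) * a z) * (z * deriv d z - ((m:ℂ)+1) * d z))
      =ᶠ[𝓝 (0:ℂ)]
      fun z => (z * deriv c z - ((m:ℂ)+1) * c z) * (z * deriv b z - ((m:ℂ)+1) * b z) := by
    filter_upwards [Hnull] with z hz
    rw [hz]; ring
  obtain ⟨hsum, himp⟩ := core_aux haA hdA hd0 Hdet Hnull huA hu0 hbfac hvA hv0 hcfac hkb1 hkc1
  obtain ⟨-, himp'⟩ := core_aux haA hdA hd0 Hdet' Hnull' hvA hv0 hcfac huA hu0 hbfac hkc1 hkb1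
  refine ⟨kb, kc, u, v, huA, hu0, hbfac, hbord, hvA, hv0, hcfac, hcord, hkb1, hkc1, hsum,
    ⟨himp, fun h => by omega⟩, ⟨himp', fun h => by omega⟩⟩
lemma e21_fac {j : ℕ} {c d v : ℂ → ℂ} (hvA : AnalyticAt ℂ v 0) (hdA : AnalyticAt ℂ d 0)
    (hcfac : c =ᶠ[𝓝 (0:ℂ)] fun z => z ^ (j+1) * v z) :
    (fun z => deriv c z * d z - c z * deriv d z) =ᶠ[𝓝 (0:ℂ)]
      fun z => z ^ j * (((((j:ℂ))+1) * v z + z * deriv v z) * d z - z * (v z * deriv d z)) := by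
  filter_upwards [deriv_fac hvA hcfac, hcfac] with z h1 h2
  rw [h1, h2]; ring

lemma deriv_val {j : ℕ} {b u : ℂ → ℂ} (huA : AnalyticAt ℂ u 0)
    (hbfac : b =ᶠ[𝓝 (0:ℂ)] fun z => z ^ (j+1) * u z) :
    deriv b 0 = (0:ℂ) ^ j * ((((j:ℂ))+1) * u 0 + 0 * deriv u 0) :=
  (deriv_fac huA hbfac).eq_of_nhds

/-- factorizations of the four entries of `M′ ⬝ adj M`, in the pole case. -/
lemma entry_facs {m : ℕ} {a b c d u v w : ℂ → ℂ}
    (huA : AnalyticAt ℂ u 0) (hvA : AnalyticAt ℂ v 0) (hwA : AnalyticAt ℂ w 0)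
    (hdA : AnalyticAt ℂ d 0)
    (hbfac : b =ᶠ[𝓝 (0:ℂ)] fun z => z ^ 1 * u z)
    (hcfac : c =ᶠ[𝓝 (0:ℂ)] fun z => z ^ (2*m+1) * v z)
    (hafac : a =ᶠ[𝓝 (0:ℂ)] fun z => z ^ (2*m+2) * w z) :
    ∃ s11 s12 s21 s22 : ℂ → ℂ,
      AnalyticAt ℂ s11 0 ∧ AnalyticAt ℂ s12 0 ∧ AnalyticAt ℂ s21 0 ∧ AnalyticAt ℂ s22 0 ∧
      s11 0 = 0 ∧ s12 0 = 0 ∧ s21 0 = (((2*m+1:ℕ):ℂ)) * v 0 * d 0 ∧ s22 0 = 0 ∧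
      ((fun z => deriv a z * d z - deriv b z * c z) =ᶠ[𝓝 (0:ℂ)] fun z => z ^ (2*m) * s11 z) ∧
      ((fun z => a z * deriv b z - deriv a z * b z) =ᶠ[𝓝 (0:ℂ)] fun z => z ^ (2*m) * s12 z) ∧
      ((fun z => deriv c z * d z - c z * deriv d z) =ᶠ[𝓝 (0:ℂ)] fun z => z ^ (2*m) * s21 z) ∧
      ((fun z => a z * deriv d z - b z * deriv c z) =ᶠ[𝓝 (0:ℂ)] fun z => z ^ (2*m) * s22 z) := by
  have hA1 := deriv_fac (k := 2*m+1) hwA (by simpa using hafac)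
  have hB1 := deriv_fac (k := 0) huA (by simpa using hbfac)
  have hC1 := deriv_fac (k := 2*m) hvA (by simpa using hcfac)
  set A1 : ℂ → ℂ := fun z => (((2*m+1:ℕ):ℂ)+1) * w z + z * deriv w z with hA1def
  set B1 : ℂ → ℂ := fun z => (((0:ℕ):ℂ)+1) * u z + z * deriv u z with hB1def
  set C1 : ℂ → ℂ := fun z => (((2*m:ℕ):ℂ)+1) * v z + z * deriv v z with hC1def
  have hA1A : AnalyticAt ℂ A1 0 :=
    (analyticAt_const.mul hwA).add (analyticAt_id.mul (analyticAt_deriv hwA))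
  have hB1A : AnalyticAt ℂ B1 0 :=
    (analyticAt_const.mul huA).add (analyticAt_id.mul (analyticAt_deriv huA))
  have hC1A : AnalyticAt ℂ C1 0 :=
    (analyticAt_const.mul hvA).add (analyticAt_id.mul (analyticAt_deriv hvA))
  refine ⟨fun z => z * (A1 z * d z - B1 z * v z),
          fun z => z^2 * (w z * B1 z - A1 z * u z),
          fun z => C1 z * d z - z * (v z * deriv d z),
          fun z => z^2 * (w z * deriv d z) - z * (u z * C1 z), ?_, ?_, ?_, ?_, ?_, ?_, ?_, ?_,
          ?_, ?_, ?_, ?_⟩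
  · exact analyticAt_id.mul ((hA1A.mul hdA).sub (hB1A.mul hvA))
  · exact (analyticAt_id.pow 2).mul ((hwA.mul hB1A).sub (hA1A.mul huA))
  · exact (hC1A.mul hdA).sub (analyticAt_id.mul (hvA.mul (analyticAt_deriv hdA)))
  · exact ((analyticAt_id.pow 2).mul (hwA.mul (analyticAt_deriv hdA))).sub
      (analyticAt_id.mul (huA.mul hC1A))
  · simp
  · simp
  · simp only [hC1def, zero_mul, sub_zero, mul_zero]
    push_cast; ring
  · simp
  · filter_upwards [hA1, hB1, hcfac] with z h1 h2 h3
    rw [h1, h2, h3, hA1def, hB1def]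
    push_cast; ring
  · filter_upwards [hA1, hB1, hafac, hbfac] with z h1 h2 h3 h4
    rw [h1, h2, h3, h4, hA1def, hB1def]
    push_cast; ring
  · filter_upwards [hC1, hcfac] with z h1 h2
    rw [h1, h2, hC1def]
    push_cast; ring
  · filter_upwards [hC1, hafac, hbfac] with z h1 h2 h3
    rw [h1, h2, h3, hC1def]
    push_cast; ring


lemma hasDerivAt_matrix22 {f g h k : ℂ → ℂ} {f' g' h' k' : ℂ} {z : ℂ}
    (hf : HasDerivAt f f' z) (hg : HasDerivAt g g' z)
    (hh : HasDerivAt h h' z) (hk : HasDerivAt k k' z) :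
    HasDerivAt (fun w => (!![f w, g w; h w, k w] : Matrix (Fin 2) (Fin 2) ℂ))
      !![f', g'; h', k'] z := by
  refine hasDerivAt_pi.2 ?_
  intro i
  rw [hasDerivAt_pi]
  intro j
  fin_cases i <;> fin_cases j <;> simp [Matrix.cons_val_zero, Matrix.cons_val_one] <;>
    first
      | exact hf | exact hg | exact hh | exact hk

lemma derivF_eq {m : ℕ} {a b c d : ℂ → ℂ} {F : ℂ → Matrix (Fin 2) (Fin 2) ℂ}
    (hF : ∀ z, F z = ((z:ℂ) ^ (m+1))⁻¹ • !![a z, b z; c z, d z]) {z : ℂ} (hz : z ≠ 0)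
    (hfa : HasDerivAt a (deriv a z) z) (hfb : HasDerivAt b (deriv b z) z)
    (hfc : HasDerivAt c (deriv c z) z) (hfd : HasDerivAt d (deriv d z) z) :
    deriv F z = ((z:ℂ) ^ (m+2))⁻¹ •
      !![z * deriv a z - ((m:ℂ)+1) * a z, z * deriv b z - ((m:ℂ)+1) * b z;
         z * deriv c z - ((m:ℂ)+1) * c z, z * deriv d z - ((m:ℂ)+1) * d z] := by
  have hc : HasDerivAt (fun w : ℂ => (w ^ (m+1))⁻¹)
      (-((((m:ℕ)+1:ℂ)) * z ^ m) / (z ^ (m+1)) ^ 2) z := by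
    have := (hasDerivAt_pow (m+1) z).inv (pow_ne_zero _ hz)
    exact this.congr_deriv (by simp)
  have hM := hasDerivAt_matrix22 hfa hfb hfc hfd
  have hFd : HasDerivAt F
      ((z ^ (m+1))⁻¹ • !![deriv a z, deriv b z; deriv c z, deriv d z] +
        (-((((m:ℕ)+1:ℂ)) * z ^ m) / (z ^ (m+1)) ^ 2) • !![a z, b z; c z, d z]) z := by
    have h2 := hc.smul hM
    have hFe : F = fun w => ((w:ℂ) ^ (m+1))⁻¹ • !![a w, b w; c w, d w] := funext hF
    rw [hFe]
    exact h2
  refine hFd.deriv.trans ?_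
  have hzm1 : (z:ℂ) ^ (m+1) ≠ 0 := pow_ne_zero _ hz
  have hzm2 : (z:ℂ) ^ (m+2) ≠ 0 := pow_ne_zero _ hz
  ext i j
  fin_cases i <;> fin_cases j <;>
    simp only [Matrix.add_apply, Matrix.smul_apply, Matrix.cons_val', Matrix.cons_val_zero,
      Matrix.cons_val_one, Matrix.head_cons, Matrix.head_fin_const, Matrix.of_apply,
      Matrix.empty_val', Matrix.cons_val_fin_one, smul_eq_mul, Fin.isValue, Fin.zero_eta,
      Fin.mk_one] <;>
    (field_simp; ring)


lemma invF_eq {m : ℕ} {a b c d : ℂ → ℂ} {F : ℂ → Matrix (Fin 2) (Fin 2) ℂ}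
    (hF : ∀ z, F z = ((z:ℂ) ^ (m+1))⁻¹ • !![a z, b z; c z, d z]) {z : ℂ} (hz : z ≠ 0)
    (hdetz : a z * d z - b z * c z = z ^ (2*m+2)) :
    (F z)⁻¹ = ((z:ℂ) ^ (m+1))⁻¹ • !![d z, -b z; -c z, a z] := by
  apply Matrix.inv_eq_right_inv
  rw [hF z, Matrix.smul_mul, Matrix.mul_smul, Matrix.mul_fin_two]
  have hzm1 : (z:ℂ) ^ (m+1) ≠ 0 := pow_ne_zero _ hz
  have hmat : !![a z * d z + b z * -c z, a z * -b z + b z * a z;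
      c z * d z + d z * -c z, c z * -b z + d z * a z]
      = ((z:ℂ) ^ (2*m+2)) • (1 : Matrix (Fin 2) (Fin 2) ℂ) := by
    ext i j
    fin_cases i <;> fin_cases j <;> simp [Matrix.one_apply] <;>
      first
        | (linear_combination hdetz)
        | ring
  rw [hmat, smul_smul, smul_smul]
  have hs : (z ^ (m+1))⁻¹ * (z ^ (m+1))⁻¹ * z ^ (2*m+2) = 1 := by
    have : (z:ℂ) ^ (2*m+2) = z ^ (m+1) * z ^ (m+1) := by
      rw [← pow_add]; congr 1; omega
    rw [this]
    field_simp
  rw [hs, one_smul]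


lemma poleG_eq {m : ℕ} {a b c d : ℂ → ℂ} {z : ℂ} (hz : z ≠ 0)
    (hdetz : a z * d z - b z * c z = z ^ (2*m+2)) :
    (z:ℂ)^2 • ((((z:ℂ) ^ (m+2))⁻¹ •
      !![z * deriv a z - ((m:ℂ)+1) * a z, z * deriv b z - ((m:ℂ)+1) * b z;
         z * deriv c z - ((m:ℂ)+1) * c z, z * deriv d z - ((m:ℂ)+1) * d z]) *
      (((z:ℂ) ^ (m+1))⁻¹ • !![d z, -b z; -c z, a z]))
      = (-(((m:ℂ)+1) * z)) • (1 : Matrix (Fin 2) (Fin 2) ℂ) +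
        !![(deriv a z * d z - deriv b z * c z) / z^(2*m),
           (a z * deriv b z - deriv a z * b z) / z^(2*m);
           (deriv c z * d z - c z * deriv d z) / z^(2*m),
           (a z * deriv d z - b z * deriv c z) / z^(2*m)] := by
  have h1 : (z:ℂ)^(m+1) ≠ 0 := pow_ne_zero _ hz
  have h2 : (z:ℂ)^(m+2) ≠ 0 := pow_ne_zero _ hz
  have h3 : (z:ℂ)^(2*m) ≠ 0 := pow_ne_zero _ hz
  rw [Matrix.smul_mul, Matrix.mul_smul, Matrix.mul_fin_two, smul_smul]
  set N : ℂ := (m:ℂ)+1 with hN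
  ext i j
  fin_cases i <;> fin_cases j <;>
    simp only [Matrix.smul_apply, Matrix.add_apply, Matrix.one_apply, Matrix.cons_val',
      Matrix.cons_val_zero, Matrix.cons_val_one, Matrix.head_cons, Matrix.head_fin_const,
      Matrix.of_apply, Matrix.empty_val', Matrix.cons_val_fin_one, smul_eq_mul,
      Fin.isValue, Fin.zero_eta, Fin.mk_one, if_true, one_ne_zero, zero_ne_one,
      if_false, mul_one, mul_zero, add_zero, zero_add, reduceCtorEq, ite_true, ite_false]
  · -- (0,0)
    field_simp
    linear_combination (-(N) * z^2 * z^(2*m)) * hdetz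
  · -- (0,1)
    field_simp
    ring
  · -- (1,0)
    field_simp
    ring
  · -- (1,1)
    field_simp
    linear_combination (-(N) * z^2 * z^(2*m)) * hdetz


lemma poleG'_eq {m : ℕ} {a b c d : ℂ → ℂ} {z : ℂ} (hz : z ≠ 0)
    (hdetz : a z * d z - b z * c z = z ^ (2*m+2)) :
    (z:ℂ)^2 • ((((z:ℂ) ^ (m+1))⁻¹ • !![d z, -b z; -c z, a z]) *
      (((z:ℂ) ^ (m+2))⁻¹ •
      !![z * deriv a z - ((m:ℂ)+1) * a z, z * deriv b z - ((m:ℂ)+1) * b z;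
         z * deriv c z - ((m:ℂ)+1) * c z, z * deriv d z - ((m:ℂ)+1) * d z]))
      = (-(((m:ℂ)+1) * z)) • (1 : Matrix (Fin 2) (Fin 2) ℂ) +
        !![(deriv a z * d z - b z * deriv c z) / z^(2*m),
           (deriv b z * d z - b z * deriv d z) / z^(2*m);
           (a z * deriv c z - deriv a z * c z) / z^(2*m),
           (a z * deriv d z - deriv b z * c z) / z^(2*m)] := by
  have h1 : (z:ℂ)^(m+1) ≠ 0 := pow_ne_zero _ hz
  have h2 : (z:ℂ)^(m+2) ≠ 0 := pow_ne_zero _ hz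
  have h3 : (z:ℂ)^(2*m) ≠ 0 := pow_ne_zero _ hz
  rw [Matrix.smul_mul, Matrix.mul_smul, Matrix.mul_fin_two, smul_smul]
  set N : ℂ := (m:ℂ)+1 with hN
  ext i j
  fin_cases i <;> fin_cases j <;>
    simp only [Matrix.smul_apply, Matrix.add_apply, Matrix.one_apply, Matrix.cons_val',
      Matrix.cons_val_zero, Matrix.cons_val_one, Matrix.head_cons, Matrix.head_fin_const,
      Matrix.of_apply, Matrix.empty_val', Matrix.cons_val_fin_one, smul_eq_mul,
      Fin.isValue, Fin.zero_eta, Fin.mk_one, if_true, one_ne_zero, zero_ne_one,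
      if_false, mul_one, mul_zero, add_zero, zero_add, reduceCtorEq, ite_true, ite_false]
  · field_simp
    linear_combination (-(N) * z^2 * z^(2*m)) * hdetz
  · field_simp
    ring
  · field_simp
    ring
  · field_simp
    linear_combination (-(N) * z^2 * z^(2*m)) * hdetz



lemma isOpen_Disc : IsOpen Disc := isOpen_ball
lemma Disc_mem_nhds : Disc ∈ 𝓝 (0:ℂ) := isOpen_Disc.mem_nhds (by simp [Disc])

/-- Extension of `h / z^k` across `0`. -/
lemma extension_lemma {h g : ℂ → ℂ} {k : ℕ} (hh : DifferentiableOn ℂ h Disc)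
    (hgA : AnalyticAt ℂ g 0) (hfac : h =ᶠ[𝓝 (0:ℂ)] fun z => z ^ k * g z) :
    ∃ E : ℂ → ℂ, DifferentiableOn ℂ E Disc ∧ (∀ z ∈ Disc, z ≠ 0 → E z = h z / z ^ k) ∧
      E 0 = g 0 := by
  classical
  refine ⟨fun z => if z = 0 then g 0 else h z / z ^ k, ?_, ?_, by simp⟩
  · intro z hzD
    by_cases hz : z = 0
    · subst hz
      have hEg : (fun z : ℂ => if z = 0 then g 0 else h z / z ^ k) =ᶠ[𝓝 (0:ℂ)] g := by
        filter_upwards [hfac] with w hw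
        by_cases hw0 : w = 0
        · simp [hw0]
        · rw [if_neg hw0, hw, mul_comm, mul_div_assoc, div_self (pow_ne_zero _ hw0), mul_one]
      exact (hgA.differentiableAt.congr_of_eventuallyEq hEg).differentiableWithinAt
    · have hd : DifferentiableAt ℂ (fun w => h w / w ^ k) z := by
        exact (hh.differentiableAt (isOpen_Disc.mem_nhds hzD)).div
          ((differentiable_pow k).differentiableAt) (pow_ne_zero _ hz)
      have hEg : (fun w : ℂ => if w = 0 then g 0 else h w / w ^ k)
          =ᶠ[𝓝 z] fun w => h w / w ^ k := by
        filter_upwards [isOpen_compl_singleton.mem_nhds (by simpa using hz)] with w hw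
        rw [if_neg (by simpa using hw)]
      exact (hd.congr_of_eventuallyEq hEg).differentiableWithinAt
  · intro z hzD hz
    simp [hz]

/-- equality on the punctured disc upgrades to germ equality at 0. -/
lemma pdisc_to_germ {f g : ℂ → ℂ} (hf : ContinuousAt f 0) (hg : ContinuousAt g 0)
    (h : ∀ z ∈ PDisc, f z = g z) : f =ᶠ[𝓝 (0:ℂ)] g := by
  have hev : ∀ᶠ z in 𝓝[≠] (0:ℂ), f z = g z := by
    filter_upwards [nhdsWithin_le_nhds Disc_mem_nhds, self_mem_nhdsWithin] with z hz hz0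
    exact h z ⟨hz, hz0⟩
  have h0 : f 0 = g 0 := by
    refine tendsto_nhds_unique (l := 𝓝[≠] (0:ℂ)) ?_ hg.continuousWithinAt.tendsto
    exact hf.continuousWithinAt.tendsto.congr' hev
  filter_upwards [Disc_mem_nhds] with z hz
  by_cases hz0 : z = 0
  · rw [hz0]; exact h0
  · exact h z ⟨hz, hz0⟩

lemma entry_diffOn {H : ℂ → Matrix (Fin 2) (Fin 2) ℂ} (hH : DifferentiableOn ℂ H Disc)
    (i j : Fin 2) : DifferentiableOn ℂ (fun z => H z i j) Disc := by
  have h1 := differentiableOn_pi.1 hH i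
  exact differentiableOn_pi.1 h1 j

lemma matrix_diffOn {f g h k : ℂ → ℂ} (hf : DifferentiableOn ℂ f Disc)
    (hg : DifferentiableOn ℂ g Disc) (hh : DifferentiableOn ℂ h Disc)
    (hk : DifferentiableOn ℂ k Disc) :
    DifferentiableOn ℂ (fun z => (!![f z, g z; h z, k z] : Matrix (Fin 2) (Fin 2) ℂ)) Disc := by
  refine differentiableOn_pi.2 ?_
  intro i
  rw [differentiableOn_pi]
  intro j
  fin_cases i <;> fin_cases j <;> simpa

lemma entry10 (α w x y t : ℂ) :
    ((α • (1 : Matrix (Fin 2) (Fin 2) ℂ)) + !![w, x; y, t]) 1 0 = y := by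
  simp [Matrix.add_apply, Matrix.smul_apply, Matrix.one_apply]

lemma entry01 (α w x y t : ℂ) :
    ((α • (1 : Matrix (Fin 2) (Fin 2) ℂ)) + !![w, x; y, t]) 0 1 = x := by
  simp [Matrix.add_apply, Matrix.smul_apply, Matrix.one_apply]

theorem pole_order_two_characterization
    (n : ℕ) (hn : 1 ≤ n)
    (a b c d : ℂ → ℂ)
    (ha : DifferentiableOn ℂ a Disc) (hb : DifferentiableOn ℂ b Disc)
    (hc : DifferentiableOn ℂ c Disc) (hd : DifferentiableOn ℂ d Disc)
    (ha0 : a 0 = 0) (ha'0 : deriv a 0 = 0) (hb0 : b 0 = 0) (hc0 : c 0 = 0)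
    (hd0 : d 0 ≠ 0)
    (hdet : ∀ z ∈ Disc, a z * d z - b z * c z = z ^ (2 * n))
    (F : ℂ → Matrix (Fin 2) (Fin 2) ℂ)
    (hF : ∀ z, F z = (z ^ n)⁻¹ • !![a z, b z; c z, d z])
    (hnull : ∀ z ∈ PDisc, (deriv F z).det = 0) :
    ∀ (hcA : AnalyticAt ℂ c 0) (hbA : AnalyticAt ℂ b 0),
      (HasPoleOrderTwoAtZero (fun z => deriv F z * (F z)⁻¹) ↔
          analyticOrderAt c 0 = ((2 * n - 1 : ℕ) : ℕ∞)) ∧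
      (HasPoleOrderTwoAtZero (fun z => deriv F z * (F z)⁻¹) ↔ deriv b 0 ≠ 0) ∧
      (HasPoleOrderTwoAtZero (fun z => (F z)⁻¹ * deriv F z) ↔
          analyticOrderAt b 0 = ((2 * n - 1 : ℕ) : ℕ∞)) ∧
      (HasPoleOrderTwoAtZero (fun z => (F z)⁻¹ * deriv F z) ↔ deriv c 0 ≠ 0) := by
  intro hcA hbA
  obtain ⟨m, rfl⟩ : ∃ m, n = m + 1 := ⟨n - 1, by omega⟩
  clear hn
  have h2n : 2 * (m + 1) = 2 * m + 2 := by omega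
  have hDisc0 : Disc ∈ 𝓝 (0:ℂ) := Disc_mem_nhds
  have haA : AnalyticAt ℂ a 0 := ha.analyticAt hDisc0
  have hdA : AnalyticAt ℂ d 0 := hd.analyticAt hDisc0
  have Hdet : (fun z => a z * d z - b z * c z) =ᶠ[𝓝 (0:ℂ)] fun z => z ^ (2*m+2) := by
    filter_upwards [hDisc0] with z hz
    rw [← h2n]
    exact hdet z hz
  -- derivative of F
  have hderivF : ∀ z ∈ PDisc, deriv F z = ((z:ℂ) ^ (m+2))⁻¹ •
      !![z * deriv a z - ((m:ℂ)+1) * a z, z * deriv b z - ((m:ℂ)+1) * b z;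
         z * deriv c z - ((m:ℂ)+1) * c z, z * deriv d z - ((m:ℂ)+1) * d z] := by
    intro z hz
    have hz2 : z ≠ 0 := by simpa using hz.2
    have hmem : Disc ∈ 𝓝 z := isOpen_Disc.mem_nhds hz.1
    exact derivF_eq hF hz2 (ha.differentiableAt hmem).hasDerivAt
      (hb.differentiableAt hmem).hasDerivAt (hc.differentiableAt hmem).hasDerivAt
      (hd.differentiableAt hmem).hasDerivAt
  have hdetD : ∀ z ∈ PDisc, a z * d z - b z * c z = z ^ (2*m+2) := by
    intro z hz
    rw [← h2n]
    exact hdet z hz.1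
  have hinvF : ∀ z ∈ PDisc, (F z)⁻¹ = ((z:ℂ) ^ (m+1))⁻¹ • !![d z, -b z; -c z, a z] := by
    intro z hz
    have hz2 : z ≠ 0 := by simpa using hz.2
    exact invF_eq hF hz2 (hdetD z hz)
  -- nullity identity on the disc
  have HnullD : ∀ z ∈ Disc,
      (z * deriv a z - ((m:ℂ)+1) * a z) * (z * deriv d z - ((m:ℂ)+1) * d z)
        = (z * deriv b z - ((m:ℂ)+1) * b z) * (z * deriv c z - ((m:ℂ)+1) * c z) := by
    intro z hz
    by_cases hz0 : z = 0
    · subst hz0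
      simp [ha0, hb0]
    · have hzP : z ∈ PDisc := ⟨hz, by simpa using hz0⟩
      have hnz := hnull z hzP
      rw [hderivF z hzP, Matrix.det_smul, Matrix.det_fin_two_of] at hnz
      have hs : (((z:ℂ) ^ (m+2))⁻¹) ^ (Fintype.card (Fin 2)) ≠ 0 :=
        pow_ne_zero _ (inv_ne_zero (pow_ne_zero _ hz0))
      have hzero := (mul_eq_zero.1 hnz).resolve_left hs
      linear_combination hzero
  have Hnull : (fun z => (z * deriv a z - ((m:ℂ)+1) * a z) * (z * deriv d z - ((m:ℂ)+1) * d z))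
      =ᶠ[𝓝 (0:ℂ)]
      fun z => (z * deriv b z - ((m:ℂ)+1) * b z) * (z * deriv c z - ((m:ℂ)+1) * c z) := by
    filter_upwards [hDisc0] with z hz
    exact HnullD z hz
  obtain ⟨kb, kc, u, v, huA, hu0, hbfac, hbord, hvA, hv0, hcfac, hcord,
    hkb1, hkc1, hsum, hiff1, hiff2⟩ := core_main haA hbA hcA hdA hd0 hb0 hc0 Hdet Hnull
  -- derivative values at 0
  have hderb : deriv b 0 ≠ 0 ↔ kb = 1 := by
    obtain ⟨j, hj⟩ : ∃ j, kb = j + 1 := ⟨kb - 1, by omega⟩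
    have hval := deriv_val huA (hj ▸ hbfac)
    constructor
    · intro hne
      by_contra hne1
      rw [zero_pow (by omega : j ≠ 0), zero_mul] at hval
      exact hne hval
    · intro h1
      have hj0 : j = 0 := by omega
      rw [hj0] at hval
      simp only [pow_zero, one_mul, Nat.cast_zero, zero_add, zero_mul, add_zero, one_mul] at hval
      rw [hval]
      simpa using hu0
  have hderc : deriv c 0 ≠ 0 ↔ kc = 1 := by
    obtain ⟨j, hj⟩ : ∃ j, kc = j + 1 := ⟨kc - 1, by omega⟩
    have hval := deriv_val hvA (hj ▸ hcfac)
    constructor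
    · intro hne
      by_contra hne1
      rw [zero_pow (by omega : j ≠ 0), zero_mul] at hval
      exact hne hval
    · intro h1
      have hj0 : j = 0 := by omega
      rw [hj0] at hval
      simp only [pow_zero, one_mul, Nat.cast_zero, zero_add, zero_mul, add_zero, one_mul] at hval
      rw [hval]
      simpa using hv0
  -- differentiability of entry functions on Disc
  have hdaOn : DifferentiableOn ℂ (deriv a) Disc := ((ha.analyticOnNhd isOpen_Disc).deriv).differentiableOn
  have hdbOn : DifferentiableOn ℂ (deriv b) Disc := ((hb.analyticOnNhd isOpen_Disc).deriv).differentiableOn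
  have hdcOn : DifferentiableOn ℂ (deriv c) Disc := ((hc.analyticOnNhd isOpen_Disc).deriv).differentiableOn
  have hddOn : DifferentiableOn ℂ (deriv d) Disc := ((hd.analyticOnNhd isOpen_Disc).deriv).differentiableOn
  -- MAIN EQUIVALENCE 1 : pole of F' F⁻¹ ↔ kc = 2m+1
  have pole1 : HasPoleOrderTwoAtZero (fun z => deriv F z * (F z)⁻¹) ↔ kc = 2*m+1 := by
    constructor
    · rintro ⟨H, hHdiff, hHeq, hH0⟩
      obtain ⟨j, hj⟩ : ∃ j, kc = j + 1 := ⟨kc - 1, by omega⟩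
      have hH21cont : ContinuousAt (fun z => H z 1 0) 0 :=
        ((entry_diffOn hHdiff 1 0).differentiableAt hDisc0).continuousAt
      have he21cont : ContinuousAt (fun z => deriv c z * d z - c z * deriv d z) 0 :=
        (((analyticAt_deriv hcA).mul hdA).sub (hcA.mul (analyticAt_deriv hdA))).continuousAt
      have hpd : ∀ z ∈ PDisc, deriv c z * d z - c z * deriv d z = z ^ (2*m) * H z 1 0 := by
        intro z hz
        have hz2 : z ≠ 0 := by simpa using hz.2
        have hval : H z = (z:ℂ)^2 • (deriv F z * (F z)⁻¹) := hHeq z hz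
        rw [hderivF z hz, hinvF z hz, poleG_eq hz2 (hdetD z hz)] at hval
        have hent := congrFun (congrFun hval 1) 0
        rw [entry10] at hent
        rw [hent, mul_div_cancel₀ _ (pow_ne_zero (2*m) hz2)]
      have hgerm : (fun z => deriv c z * d z - c z * deriv d z) =ᶠ[𝓝 (0:ℂ)]
          fun z => z ^ (2*m) * H z 1 0 :=
        pdisc_to_germ he21cont (((continuous_pow (2*m)).continuousAt).mul hH21cont) hpd
      have hfac21 := e21_fac hvA hdA (hj ▸ hcfac)
      have hev : ∀ᶠ z in 𝓝 (0:ℂ),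
          z ^ j * (((((j:ℂ))+1) * v z + z * deriv v z) * d z - z * (v z * deriv d z))
            = z ^ (2*m) * H z 1 0 := by
        filter_upwards [hfac21, hgerm] with z h1 h2
        rw [← h1, h2]
      have hcof : ContinuousAt
          (fun z => (((j:ℂ)+1) * v z + z * deriv v z) * d z - z * (v z * deriv d z)) 0 :=
        (((analyticAt_const.mul hvA).add (analyticAt_id.mul (analyticAt_deriv hvA))).mul hdA).sub
          (analyticAt_id.mul (hvA.mul (analyticAt_deriv hdA))) |>.continuousAt
      have hcof0 : ((((j:ℂ))+1) * v 0 + 0 * deriv v 0) * d 0 - 0 * (v 0 * deriv d 0) ≠ 0 := by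
        rw [zero_mul, zero_mul, add_zero, sub_zero]
        exact mul_ne_zero (mul_ne_zero (Nat.cast_add_one_ne_zero j) hv0) hd0
      have hle := le_of_fac hcof hH21cont hcof0 hev
      omega
    · intro hkc
      have hkbv : kb = 1 := hiff1.2 hkc
      have hdev : ∀ᶠ z in 𝓝 (0:ℂ), d z ≠ 0 := hdA.continuousAt.eventually_ne hd0
      have hwA : AnalyticAt ℂ (fun z => (1 + u z * v z) / d z) 0 :=
        (analyticAt_const.add (huA.mul hvA)).div hdA hd0
      have hafac : a =ᶠ[𝓝 (0:ℂ)] fun z => z ^ (2*m+2) * ((1 + u z * v z) / d z) := by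
        filter_upwards [Hdet, hbfac, hcfac, hdev] with z h1 h2 h3 h4
        rw [← mul_div_assoc, eq_div_iff h4]
        calc a z * d z = z ^ (2*m+2) + b z * c z := by linear_combination h1
          _ = _ := by rw [h2, h3, hkbv, hkc]; ring
      obtain ⟨s11, s12, s21, s22, hs11A, hs12A, hs21A, hs22A, hs110, hs120, hs210, hs220,
        hf11, hf12, hf21, hf22⟩ := entry_facs huA hvA hwA hdA (hkbv ▸ hbfac) (hkc ▸ hcfac) hafac
      have hde11 : DifferentiableOn ℂ (fun z => deriv a z * d z - deriv b z * c z) Disc :=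
        (hdaOn.mul hd).sub (hdbOn.mul hc)
      have hde12 : DifferentiableOn ℂ (fun z => a z * deriv b z - deriv a z * b z) Disc :=
        (ha.mul hdbOn).sub (hdaOn.mul hb)
      have hde21 : DifferentiableOn ℂ (fun z => deriv c z * d z - c z * deriv d z) Disc :=
        (hdcOn.mul hd).sub (hc.mul hddOn)
      have hde22 : DifferentiableOn ℂ (fun z => a z * deriv d z - b z * deriv c z) Disc :=
        (ha.mul hddOn).sub (hb.mul hdcOn)
      obtain ⟨E11, hE11d, hE11eq, hE110⟩ := extension_lemma hde11 hs11A hf11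
      obtain ⟨E12, hE12d, hE12eq, hE120⟩ := extension_lemma hde12 hs12A hf12
      obtain ⟨E21, hE21d, hE21eq, hE210⟩ := extension_lemma hde21 hs21A hf21
      obtain ⟨E22, hE22d, hE22eq, hE220⟩ := extension_lemma hde22 hs22A hf22
      refine ⟨fun z => (-(((m:ℂ)+1) * z)) • (1 : Matrix (Fin 2) (Fin 2) ℂ)
          + !![E11 z, E12 z; E21 z, E22 z], ?_, ?_, ?_⟩
      · apply DifferentiableOn.add
        · have hdl : Differentiable ℂ (fun z : ℂ =>
              (-(((m:ℂ)+1) * z)) • (1 : Matrix (Fin 2) (Fin 2) ℂ)) := by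
            apply Differentiable.smul_const
            exact ((differentiable_const (((m:ℂ)+1))).mul differentiable_id).neg
          exact hdl.differentiableOn
        · exact matrix_diffOn hE11d hE12d hE21d hE22d
      · intro z hz
        have hz2 : z ≠ 0 := by simpa using hz.2
        show (-(((m:ℂ)+1) * z)) • (1 : Matrix (Fin 2) (Fin 2) ℂ)
            + !![E11 z, E12 z; E21 z, E22 z] = (z:ℂ)^2 • (deriv F z * (F z)⁻¹)
        rw [hderivF z hz, hinvF z hz, poleG_eq hz2 (hdetD z hz)]
        rw [hE11eq z hz.1 hz2, hE12eq z hz.1 hz2, hE21eq z hz.1 hz2, hE22eq z hz.1 hz2]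
      · intro hcon
        have hent := congrFun (congrFun hcon 1) 0
        have : E21 0 = 0 := by simpa [entry10] using hent
        rw [hE210, hs210] at this
        have hne : ((2*m+1 : ℕ) : ℂ) ≠ 0 := Nat.cast_ne_zero.2 (by omega)
        exact (mul_ne_zero (mul_ne_zero hne hv0) hd0) this
  -- MAIN EQUIVALENCE 2 : pole of F⁻¹ F' ↔ kb = 2m+1
  have pole2 : HasPoleOrderTwoAtZero (fun z => (F z)⁻¹ * deriv F z) ↔ kb = 2*m+1 := by
    constructor
    · rintro ⟨H, hHdiff, hHeq, hH0⟩
      obtain ⟨j, hj⟩ : ∃ j, kb = j + 1 := ⟨kb - 1, by omega⟩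
      have hH01cont : ContinuousAt (fun z => H z 0 1) 0 :=
        ((entry_diffOn hHdiff 0 1).differentiableAt hDisc0).continuousAt
      have he12cont : ContinuousAt (fun z => deriv b z * d z - b z * deriv d z) 0 :=
        (((analyticAt_deriv hbA).mul hdA).sub (hbA.mul (analyticAt_deriv hdA))).continuousAt
      have hpd : ∀ z ∈ PDisc, deriv b z * d z - b z * deriv d z = z ^ (2*m) * H z 0 1 := by
        intro z hz
        have hz2 : z ≠ 0 := by simpa using hz.2
        have hval : H z = (z:ℂ)^2 • ((F z)⁻¹ * deriv F z) := hHeq z hz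
        rw [hderivF z hz, hinvF z hz, poleG'_eq hz2 (hdetD z hz)] at hval
        have hent := congrFun (congrFun hval 0) 1
        rw [entry01] at hent
        rw [hent, mul_div_cancel₀ _ (pow_ne_zero (2*m) hz2)]
      have hgerm : (fun z => deriv b z * d z - b z * deriv d z) =ᶠ[𝓝 (0:ℂ)]
          fun z => z ^ (2*m) * H z 0 1 :=
        pdisc_to_germ he12cont (((continuous_pow (2*m)).continuousAt).mul hH01cont) hpd
      have hfac12 := e21_fac huA hdA (hj ▸ hbfac)
      have hev : ∀ᶠ z in 𝓝 (0:ℂ),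
          z ^ j * (((((j:ℂ))+1) * u z + z * deriv u z) * d z - z * (u z * deriv d z))
            = z ^ (2*m) * H z 0 1 := by
        filter_upwards [hfac12, hgerm] with z h1 h2
        rw [← h1, h2]
      have hcof : ContinuousAt
          (fun z => (((j:ℂ)+1) * u z + z * deriv u z) * d z - z * (u z * deriv d z)) 0 :=
        (((analyticAt_const.mul huA).add (analyticAt_id.mul (analyticAt_deriv huA))).mul hdA).sub
          (analyticAt_id.mul (huA.mul (analyticAt_deriv hdA))) |>.continuousAt
      have hcof0 : ((((j:ℂ))+1) * u 0 + 0 * deriv u 0) * d 0 - 0 * (u 0 * deriv d 0) ≠ 0 := by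
        rw [zero_mul, zero_mul, add_zero, sub_zero]
        exact mul_ne_zero (mul_ne_zero (Nat.cast_add_one_ne_zero j) hu0) hd0
      have hle := le_of_fac hcof hH01cont hcof0 hev
      omega
    · intro hkb
      have hkcv : kc = 1 := hiff2.2 hkb
      have hdev : ∀ᶠ z in 𝓝 (0:ℂ), d z ≠ 0 := hdA.continuousAt.eventually_ne hd0
      have hwA : AnalyticAt ℂ (fun z => (1 + v z * u z) / d z) 0 :=
        (analyticAt_const.add (hvA.mul huA)).div hdA hd0
      have hafac : a =ᶠ[𝓝 (0:ℂ)] fun z => z ^ (2*m+2) * ((1 + v z * u z) / d z) := by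
        filter_upwards [Hdet, hbfac, hcfac, hdev] with z h1 h2 h3 h4
        rw [← mul_div_assoc, eq_div_iff h4]
        calc a z * d z = z ^ (2*m+2) + b z * c z := by linear_combination h1
          _ = _ := by rw [h2, h3, hkcv, hkb]; ring
      obtain ⟨s11, s12, s21, s22, hs11A, hs12A, hs21A, hs22A, hs110, hs120, hs210, hs220,
        hf11, hf12, hf21, hf22⟩ := entry_facs hvA huA hwA hdA (hkcv ▸ hcfac) (hkb ▸ hbfac) hafac
      -- hf11 : deriv a * d - deriv c * b ; need deriv a * d - b * deriv c
      have hf11' : (fun z => deriv a z * d z - b z * deriv c z) =ᶠ[𝓝 (0:ℂ)]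
          fun z => z ^ (2*m) * s11 z := by
        filter_upwards [hf11] with z h1
        rw [← h1]; ring_nf
      have hf22' : (fun z => a z * deriv d z - deriv b z * c z) =ᶠ[𝓝 (0:ℂ)]
          fun z => z ^ (2*m) * s22 z := by
        filter_upwards [hf22] with z h1
        rw [← h1]; ring_nf
      have hde11 : DifferentiableOn ℂ (fun z => deriv a z * d z - b z * deriv c z) Disc :=
        (hdaOn.mul hd).sub (hb.mul hdcOn)
      have hde12 : DifferentiableOn ℂ (fun z => deriv b z * d z - b z * deriv d z) Disc :=
        (hdbOn.mul hd).sub (hb.mul hddOn)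
      have hde21 : DifferentiableOn ℂ (fun z => a z * deriv c z - deriv a z * c z) Disc :=
        (ha.mul hdcOn).sub (hdaOn.mul hc)
      have hde22 : DifferentiableOn ℂ (fun z => a z * deriv d z - deriv b z * c z) Disc :=
        (ha.mul hddOn).sub (hdbOn.mul hc)
      obtain ⟨E11, hE11d, hE11eq, hE110⟩ := extension_lemma hde11 hs11A hf11'
      obtain ⟨E12, hE12d, hE12eq, hE120⟩ := extension_lemma hde12 hs21A hf21
      obtain ⟨E21, hE21d, hE21eq, hE210⟩ := extension_lemma hde21 hs12A hf12
      obtain ⟨E22, hE22d, hE22eq, hE220⟩ := extension_lemma hde22 hs22A hf22'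
      refine ⟨fun z => (-(((m:ℂ)+1) * z)) • (1 : Matrix (Fin 2) (Fin 2) ℂ)
          + !![E11 z, E12 z; E21 z, E22 z], ?_, ?_, ?_⟩
      · apply DifferentiableOn.add
        · have hdl : Differentiable ℂ (fun z : ℂ =>
              (-(((m:ℂ)+1) * z)) • (1 : Matrix (Fin 2) (Fin 2) ℂ)) := by
            apply Differentiable.smul_const
            exact ((differentiable_const (((m:ℂ)+1))).mul differentiable_id).neg
          exact hdl.differentiableOn
        · exact matrix_diffOn hE11d hE12d hE21d hE22d
      · intro z hz
        have hz2 : z ≠ 0 := by simpa using hz.2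
        show (-(((m:ℂ)+1) * z)) • (1 : Matrix (Fin 2) (Fin 2) ℂ)
            + !![E11 z, E12 z; E21 z, E22 z] = (z:ℂ)^2 • ((F z)⁻¹ * deriv F z)
        rw [hderivF z hz, hinvF z hz, poleG'_eq hz2 (hdetD z hz)]
        rw [hE11eq z hz.1 hz2, hE12eq z hz.1 hz2, hE21eq z hz.1 hz2, hE22eq z hz.1 hz2]
      · intro hcon
        have hent := congrFun (congrFun hcon 0) 1
        have : E12 0 = 0 := by simpa [entry01] using hent
        rw [hE120, hs210] at this
        have hne : ((2*m+1 : ℕ) : ℂ) ≠ 0 := Nat.cast_ne_zero.2 (by omega)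
        exact (mul_ne_zero (mul_ne_zero hne hu0) hd0) this
  -- conclude
  have hcast : ((2 * (m+1) - 1 : ℕ) : ℕ∞) = ((2*m+1 : ℕ) : ℕ∞) := by
    have h : (2 * (m+1) - 1 : ℕ) = 2*m+1 := by omega
    rw [h]
  refine ⟨?_, ?_, ?_, ?_⟩
  · rw [pole1, hcord, hcast, Nat.cast_inj]
  · rw [pole1]
    exact hiff1.symm.trans hderb.symm
  · rw [pole2, hbord, hcast, Nat.cast_inj]
  · rw [pole2]
    exact hiff2.symm.trans hderc.symm
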